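/- Let p ∈ L²(ℝ) be compactly supported. If there exists a compactly supported orthogonal generator for S(p), then it is unique up to an integer shift and multiplication by a nonzero scalar: any two nonzero compactly supported functions f₁, f₂ ∈ L²(ℝ) whose integer translates are mutually orthogonal and whose shift-invariant closed spans both equal S(p) satisfy f₂ = c · f₁(· − n) for some c ∈ ℂ \ {0} and n ∈ ℤ. -/

import Mathlib

open MeasureTheory Complex Filter Topology
open scoped Real ENNReal

noncomputable section

/-- The integer translate `f(· − n)` of `f ∈ L²(ℝ)` as an element of `L²(ℝ)`. -/
def translateLp (f : ℝ → ℂ) (hf : MemLp f 2 (volume : Measure ℝ)) (n : ℤ) :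
    Lp ℂ 2 (volume : Measure ℝ) :=
  (hf.comp_measurePreserving (measurePreserving_sub_right volume (n : ℝ))).toLp _

/-- `S(f)`: the `L²`-closure of the span of the integer translates of `f`. -/
def spanTranslates (f : ℝ → ℂ) (hf : MemLp f 2 (volume : Measure ℝ)) :
    Submodule ℂ (Lp ℂ 2 (volume : Measure ℝ)) :=
  (Submodule.span ℂ (Set.range (translateLp f hf))).topologicalClosure

local notation "⟪" x ", " y "⟫" => @inner ℂ _ _ x y

lemma translateLp_coeFn (f : ℝ → ℂ) (hf : MemLp f 2 (volume : Measure ℝ)) (n : ℤ) :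
    (translateLp f hf n : ℝ → ℂ) =ᵐ[volume] fun t => f (t - (n : ℝ)) :=
  MemLp.coeFn_toLp _
lemma comp_translate_ae {g g' : ℝ → ℂ} (m : ℝ) (h : g =ᵐ[volume] g') :
    (fun t => g (t - m)) =ᵐ[volume] fun t => g' (t - m) := by
  have hm := measurePreserving_sub_right (volume : Measure ℝ) m
  exact ae_eq_comp (f := fun t : ℝ => t - m) hm.measurable.aemeasurable (by rwa [hm.map_eq])

lemma translateLp_ne_zero (f : ℝ → ℂ) (hf : MemLp f 2 (volume : Measure ℝ))
    (hnf : ¬ f =ᵐ[volume] (fun _ => 0)) (n : ℤ) : translateLp f hf n ≠ 0 := by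
  intro h
  apply hnf
  have h1 : (fun t : ℝ => f (t - (n : ℝ))) =ᵐ[volume] (fun _ => 0) := by
    refine (translateLp_coeFn f hf n).symm.trans ?_
    rw [h]
    exact Lp.coeFn_zero _ _ _
  have h2 := comp_translate_ae (-(n : ℝ)) h1
  simpa using h2

lemma translateLp_zero_eq (f : ℝ → ℂ) (hf : MemLp f 2 (volume : Measure ℝ)) :
    translateLp f hf 0 = hf.toLp f :=
  MemLp.toLp_congr _ hf (Filter.EventuallyEq.of_eq (funext fun t => by simp))

/-- translation operator on Lp -/
def tau (m : ℤ) : Lp ℂ 2 (volume : Measure ℝ) →+ Lp ℂ 2 (volume : Measure ℝ) :=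
  Lp.compMeasurePreserving (fun t : ℝ => t - (m : ℝ)) (measurePreserving_sub_right volume (m : ℝ))

lemma tau_coeFn (m : ℤ) (u : Lp ℂ 2 (volume : Measure ℝ)) :
    (tau m u : ℝ → ℂ) =ᵐ[volume] fun t => u (t - (m : ℝ)) :=
  Lp.coeFn_compMeasurePreserving u _

lemma tau_toLp (g : ℝ → ℂ) (hg : MemLp g 2 (volume : Measure ℝ)) (m : ℤ) :
    tau m (hg.toLp g) = translateLp g hg m := by
  apply Lp.ext
  refine (tau_coeFn m _).trans (Filter.EventuallyEq.trans ?_ (translateLp_coeFn g hg m).symm)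
  exact comp_translate_ae (m : ℝ) hg.coeFn_toLp

lemma tau_translate (f : ℝ → ℂ) (hf : MemLp f 2 (volume : Measure ℝ)) (n m : ℤ) :
    tau m (translateLp f hf n) = translateLp f hf (n + m) := by
  apply Lp.ext
  refine (tau_coeFn m _).trans (Filter.EventuallyEq.trans ?_ (translateLp_coeFn f hf (n + m)).symm)
  refine (comp_translate_ae (m : ℝ) (translateLp_coeFn f hf n)).trans
    (Filter.EventuallyEq.of_eq (funext fun t => ?_))
  push_cast
  ring_nf

lemma tau_smul (m : ℤ) (c : ℂ) (u : Lp ℂ 2 (volume : Measure ℝ)) :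
    tau m (c • u) = c • tau m u := by
  apply Lp.ext
  filter_upwards [tau_coeFn m (c • u), comp_translate_ae (m : ℝ) (Lp.coeFn_smul c u),
    Lp.coeFn_smul c (tau m u), tau_coeFn m u] with t h1 h2 h3 h4
  rw [h1, h2, h3, Pi.smul_apply, Pi.smul_apply, h4]

lemma inner_translate_toLp (f g : ℝ → ℂ) (hf : MemLp f 2 (volume : Measure ℝ))
    (hg : MemLp g 2 (volume : Measure ℝ)) (n : ℤ) :
    ⟪translateLp f hf n, hg.toLp g⟫
      = ∫ t : ℝ, (starRingEnd ℂ) (f (t - (n : ℝ))) * g t := by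
  rw [L2.inner_def]
  refine integral_congr_ae ?_
  filter_upwards [translateLp_coeFn f hf n, hg.coeFn_toLp] with t h1 h2
  rw [RCLike.inner_apply, h1, h2, mul_comm]

lemma inner_translate_translate (f g : ℝ → ℂ) (hf : MemLp f 2 (volume : Measure ℝ))
    (hg : MemLp g 2 (volume : Measure ℝ)) (n m : ℤ) :
    ⟪translateLp f hf n, translateLp g hg m⟫
      = ∫ t : ℝ, (starRingEnd ℂ) (f (t - (n : ℝ))) * g (t - (m : ℝ)) := by
  rw [L2.inner_def]
  refine integral_congr_ae ?_
  filter_upwards [translateLp_coeFn f hf n, translateLp_coeFn g hg m] with t h1 h2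
  rw [RCLike.inner_apply, h1, h2, mul_comm]

/-- Orthogonality of translates, in inner-product form. -/
lemma inner_translate_eq_ite (f : ℝ → ℂ) (hf : MemLp f 2 (volume : Measure ℝ))
    (horth : ∀ n m : ℤ, n ≠ m →
      (∫ t : ℝ, f (t - n) * (starRingEnd ℂ) (f (t - m))) = 0)
    (n m : ℤ) :
    ⟪translateLp f hf n, translateLp f hf m⟫
      = if n = m then ⟪translateLp f hf 0, translateLp f hf 0⟫ else 0 := by
  split_ifs with h
  · subst h
    rw [inner_translate_translate, inner_translate_translate]
    rw [show ((0:ℤ):ℝ) = 0 by norm_num]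
    simp only [sub_zero]
    exact integral_sub_right_eq_self (fun t => (starRingEnd ℂ) (f t) * f t) (n : ℝ)
  · rw [inner_translate_translate]
    have h0 := congrArg (starRingEnd ℂ) (horth n m h)
    rw [← integral_conj] at h0
    simpa [mul_comm] using h0

lemma repr_finite (f g : ℝ → ℂ) (hf : MemLp f 2 (volume : Measure ℝ))
    (hg : MemLp g 2 (volume : Measure ℝ))
    (hcf : HasCompactSupport f) (hcg : HasCompactSupport g)
    (hnf : ¬ f =ᵐ[volume] (fun _ => 0))
    (horth : ∀ n m : ℤ, n ≠ m →
      (∫ t : ℝ, f (t - n) * (starRingEnd ℂ) (f (t - m))) = 0)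
    (hmem : hg.toLp g ∈ spanTranslates f hf) :
    ∃ (A : Finset ℤ) (a : ℤ → ℂ), hg.toLp g = ∑ n ∈ A, a n • translateLp f hf n := by
  set T := translateLp f hf with hT
  set G := hg.toLp g with hG
  set K : ℂ := ⟪T 0, T 0⟫ with hKdef
  have hK : K ≠ 0 := by
    intro h0
    exact translateLp_ne_zero f hf hnf 0 (inner_self_eq_zero.mp h0)
  -- bound on supports
  obtain ⟨R₁, hR₁⟩ := hcf.isBounded.subset_closedBall 0
  obtain ⟨R₂, hR₂⟩ := hcg.isBounded.subset_closedBall 0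
  set N : ℤ := max ⌈R₁ + R₂⌉ 0 with hN
  set A : Finset ℤ := Finset.Icc (-N) N with hA
  have hvanish : ∀ n : ℤ, n ∉ A → ⟪T n, G⟫ = 0 := by
    intro n hn
    rw [hT, hG, inner_translate_toLp]
    have hz : ∀ t : ℝ, (starRingEnd ℂ) (f (t - (n : ℝ))) * g t = 0 := by
      intro t
      by_cases hgt : g t = 0
      · simp [hgt]
      · have ht : t ∈ tsupport g := subset_closure (by exact hgt)
        have h2 : |t| ≤ R₂ := by simpa [Real.dist_eq] using hR₂ ht
        have h1 : f (t - (n : ℝ)) = 0 := by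
          apply image_eq_zero_of_notMem_tsupport
          intro hmem'
          have h3 : |t - (n : ℝ)| ≤ R₁ := by simpa [Real.dist_eq] using hR₁ hmem'
          have h4 : |(n : ℝ)| ≤ R₁ + R₂ := by
            have : |(n:ℝ)| ≤ |t - n| + |t| := by
              have he : t - (n:ℝ) - t = -(n:ℝ) := by ring
              calc |(n:ℝ)| = |t - (n:ℝ) - t| := by rw [he, abs_neg]
              _ ≤ |t - n| + |t| := abs_sub _ _
            linarith
          have h5 : (N : ℝ) + 1 ≤ |(n : ℝ)| := by
            rw [← Int.cast_abs]
            have : N + 1 ≤ |n| := by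
              rw [le_abs]
              simp only [hA, Finset.mem_Icc, not_and_or, not_le] at hn
              omega
            exact_mod_cast this
          have h6 : R₁ + R₂ ≤ (N : ℝ) := by
            have : (⌈R₁ + R₂⌉ : ℝ) ≤ (N : ℝ) := by exact_mod_cast Int.le_max_left _ _
            linarith [Int.le_ceil (R₁ + R₂)]
          linarith
        simp [h1]
    simp [hz]
  set a : ℤ → ℂ := fun n => ⟪T n, G⟫ / K with ha
  refine ⟨A, a, ?_⟩
  set x : Lp ℂ 2 (volume : Measure ℝ) := G - ∑ n ∈ A, a n • T n with hx
  have hx_inner : ∀ j : ℤ, ⟪T j, x⟫ = 0 := by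
    intro j
    rw [hx, inner_sub_right, inner_sum]
    have hsum : ∑ n ∈ A, ⟪T j, a n • T n⟫ = if j ∈ A then a j * K else 0 := by
      have : ∀ n ∈ A, ⟪T j, a n • T n⟫ = if j = n then a n * K else 0 := by
        intro n _
        rw [inner_smul_right, hT, inner_translate_eq_ite f hf horth]
        split_ifs <;> simp [hKdef, hT]
      rw [Finset.sum_congr rfl this, Finset.sum_ite_eq]
    rw [hsum]
    by_cases hj : j ∈ A
    · rw [if_pos hj, ha]
      field_simp
      ring
    · rw [if_neg hj, hvanish j hj, sub_zero]
  have hx_mem : x ∈ spanTranslates f hf := by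
    refine Submodule.sub_mem _ hmem (Submodule.sum_mem _ fun n _ => ?_)
    exact Submodule.smul_mem _ _
      (Submodule.le_topologicalClosure _ (Submodule.subset_span ⟨n, rfl⟩))
  have hx0 : x = 0 := by
    have horthx : ∀ y ∈ Submodule.span ℂ (Set.range T), ⟪y, x⟫ = 0 := by
      intro y hy
      induction hy using Submodule.span_induction with
      | mem y hy => obtain ⟨j, rfl⟩ := hy; exact hx_inner j
      | zero => simp
      | add y z hy hz hy' hz' => rw [inner_add_left, hy', hz', add_zero]
      | smul c y hy hy' => rw [inner_smul_left, hy', mul_zero]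
    have hclosed : IsClosed {y : Lp ℂ 2 (volume : Measure ℝ) | ⟪y, x⟫ = 0} :=
      isClosed_eq (Continuous.inner continuous_id continuous_const) continuous_const
    have hxc : x ∈ closure ((Submodule.span ℂ (Set.range T)) : Set (Lp ℂ 2 (volume : Measure ℝ))) := by
      rw [← Submodule.topologicalClosure_coe]
      exact hx_mem
    have hxo : ⟪x, x⟫ = 0 := closure_minimal horthx hclosed hxc
    exact inner_self_eq_zero.mp hxo
  have := sub_eq_zero.mp hx0
  exact this

lemma self_mem_spanTranslates (f : ℝ → ℂ) (hf : MemLp f 2 (volume : Measure ℝ)) :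
    hf.toLp f ∈ spanTranslates f hf := by
  rw [← translateLp_zero_eq]
  exact Submodule.le_topologicalClosure _ (Submodule.subset_span ⟨0, rfl⟩)

lemma toLp_ne_zero (f : ℝ → ℂ) (hf : MemLp f 2 (volume : Measure ℝ))
    (hnf : ¬ f =ᵐ[volume] (fun _ => 0)) : hf.toLp f ≠ 0 := by
  rw [← translateLp_zero_eq]
  exact translateLp_ne_zero f hf hnf 0

/-- for compactly supported `p ∈ L²(ℝ)`, a compactly supported orthogonal
generator of `S(p)` is unique up to an integer shift and a nonzero scalar: if `f₁, f₂` are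
nonzero, compactly supported, have mutually orthogonal integer translates, and their
shift-invariant closed spans both equal `S(p)`, then `f₂ = c·f₁(·−n)` for some `c ≠ 0`,
`n ∈ ℤ`. -/
theorem stmt15 (p : ℝ → ℂ) (hp : MemLp p 2 (volume : Measure ℝ))
    (hcs : HasCompactSupport p)
    (f₁ f₂ : ℝ → ℂ)
    (hf₁ : MemLp f₁ 2 (volume : Measure ℝ)) (hf₂ : MemLp f₂ 2 (volume : Measure ℝ))
    (hcs₁ : HasCompactSupport f₁) (hcs₂ : HasCompactSupport f₂)
    (hne₁ : ¬ f₁ =ᵐ[volume] (fun _ => 0)) (hne₂ : ¬ f₂ =ᵐ[volume] (fun _ => 0))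
    (horth₁ : ∀ n m : ℤ, n ≠ m →
      (∫ t : ℝ, f₁ (t - n) * (starRingEnd ℂ) (f₁ (t - m))) = 0)
    (horth₂ : ∀ n m : ℤ, n ≠ m →
      (∫ t : ℝ, f₂ (t - n) * (starRingEnd ℂ) (f₂ (t - m))) = 0)
    (hspan₁ : spanTranslates f₁ hf₁ = spanTranslates p hp)
    (hspan₂ : spanTranslates f₂ hf₂ = spanTranslates p hp) :
    ∃ c : ℂ, c ≠ 0 ∧ ∃ n : ℤ, f₂ =ᵐ[volume] (fun t => c * f₁ (t - n)) := by
  have hmem₂ : hf₂.toLp f₂ ∈ spanTranslates f₁ hf₁ := by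
    rw [hspan₁, ← hspan₂]; exact self_mem_spanTranslates f₂ hf₂
  have hmem₁ : hf₁.toLp f₁ ∈ spanTranslates f₂ hf₂ := by
    rw [hspan₂, ← hspan₁]; exact self_mem_spanTranslates f₁ hf₁
  obtain ⟨A₀, a, hrepr₂⟩ := repr_finite f₁ f₂ hf₁ hf₂ hcs₁ hcs₂ hne₁ horth₁ hmem₂
  obtain ⟨B₀, b, hrepr₁⟩ := repr_finite f₂ f₁ hf₂ hf₁ hcs₂ hcs₁ hne₂ horth₂ hmem₁
  set T₁ := translateLp f₁ hf₁ with hT₁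
  set A : Finset ℤ := A₀.filter (fun n => a n ≠ 0) with hA
  set B : Finset ℤ := B₀.filter (fun m => b m ≠ 0) with hB
  have hrepr₂' : hf₂.toLp f₂ = ∑ n ∈ A, a n • T₁ n := by
    rw [hrepr₂]
    symm
    apply Finset.sum_filter_of_ne
    intro n _ h hc
    exact h (by rw [hc, zero_smul])
  have hrepr₁' : hf₁.toLp f₁ = ∑ m ∈ B, b m • translateLp f₂ hf₂ m := by
    rw [hrepr₁]
    symm
    apply Finset.sum_filter_of_ne
    intro n _ h hc
    exact h (by rw [hc, zero_smul])
  have hAn : ∀ n ∈ A, a n ≠ 0 := fun n hn => (Finset.mem_filter.mp hn).2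
  have hBm : ∀ m ∈ B, b m ≠ 0 := fun m hm => (Finset.mem_filter.mp hm).2
  have hA_ne : A.Nonempty := by
    rw [Finset.nonempty_iff_ne_empty]
    intro h0
    rw [h0, Finset.sum_empty] at hrepr₂'
    exact toLp_ne_zero f₂ hf₂ hne₂ hrepr₂'
  have hB_ne : B.Nonempty := by
    rw [Finset.nonempty_iff_ne_empty]
    intro h0
    rw [h0, Finset.sum_empty] at hrepr₁'
    exact toLp_ne_zero f₁ hf₁ hne₁ hrepr₁'
  -- translates of f₂ in terms of translates of f₁
  have hT2 : ∀ m : ℤ, translateLp f₂ hf₂ m = ∑ n ∈ A, a n • T₁ (n + m) := by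
    intro m
    rw [← tau_toLp f₂ hf₂ m, hrepr₂', map_sum]
    exact Finset.sum_congr rfl fun n _ => by rw [tau_smul, tau_translate]
  have hF₁ : hf₁.toLp f₁ = ∑ m ∈ B, b m • ∑ n ∈ A, a n • T₁ (n + m) := by
    rw [hrepr₁']
    exact Finset.sum_congr rfl fun m _ => by rw [hT2]
  set K : ℂ := ⟪T₁ 0, T₁ 0⟫ with hKdef
  have hK : K ≠ 0 := fun h0 =>
    translateLp_ne_zero f₁ hf₁ hne₁ 0 (inner_self_eq_zero.mp h0)
  -- the delta identity
  set c : ℤ → ℂ := fun j => ∑ m ∈ B, ∑ n ∈ A, (if j = n + m then b m * a n else 0) with hc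
  have hdelta : ∀ j : ℤ, (if j = 0 then K else 0) = c j * K := by
    intro j
    have lhs : ⟪T₁ j, hf₁.toLp f₁⟫ = if j = 0 then K else 0 := by
      rw [← translateLp_zero_eq f₁ hf₁, hT₁]
      exact inner_translate_eq_ite f₁ hf₁ horth₁ j 0
    rw [← lhs, hF₁, inner_sum, hc, Finset.sum_mul]
    refine Finset.sum_congr rfl fun m _ => ?_
    rw [inner_smul_right, inner_sum, Finset.mul_sum, Finset.sum_mul]
    refine Finset.sum_congr rfl fun n _ => ?_
    rw [inner_smul_right, hT₁, inner_translate_eq_ite f₁ hf₁ horth₁ j (n + m)]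
    split_ifs with h
    · rw [← hT₁, ← hKdef]; ring
    · simp
  have hdelta' : ∀ j : ℤ, j ≠ 0 → c j = 0 := by
    intro j hj
    have := hdelta j
    rw [if_neg hj] at this
    rcases mul_eq_zero.mp this.symm with h | h
    · exact h
    · exact absurd h hK
  -- min/max argument
  set n₁ := A.min' hA_ne with hn₁
  set n₂ := A.max' hA_ne with hn₂
  set m₁ := B.min' hB_ne with hm₁
  set m₂ := B.max' hB_ne with hm₂
  have hprod : ∀ j : ℤ, c j = ∑ q ∈ B ×ˢ A, (if j = q.2 + q.1 then b q.1 * a q.2 else 0) := by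
    intro j
    rw [hc, Finset.sum_product]
  have hc_min : c (n₁ + m₁) = b m₁ * a n₁ := by
    rw [hprod]
    rw [Finset.sum_eq_single_of_mem (m₁, n₁)
      (Finset.mem_product.mpr ⟨B.min'_mem hB_ne, A.min'_mem hA_ne⟩)]
    · rw [if_pos rfl]
    · rintro ⟨m, n⟩ hq hne
      rw [Finset.mem_product] at hq
      rw [if_neg]
      intro h
      have h1 := A.min'_le n hq.2
      have h2 := B.min'_le m hq.1
      have : n = n₁ ∧ m = m₁ := by omega
      exact hne (by rw [Prod.mk.injEq]; exact ⟨this.2, this.1⟩)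
  have hc_max : c (n₂ + m₂) = b m₂ * a n₂ := by
    rw [hprod]
    rw [Finset.sum_eq_single_of_mem (m₂, n₂)
      (Finset.mem_product.mpr ⟨B.max'_mem hB_ne, A.max'_mem hA_ne⟩)]
    · rw [if_pos rfl]
    · rintro ⟨m, n⟩ hq hne
      rw [Finset.mem_product] at hq
      rw [if_neg]
      intro h
      have h1 := A.le_max' n hq.2
      have h2 := B.le_max' m hq.1
      have : n = n₂ ∧ m = m₂ := by omega
      exact hne (by rw [Prod.mk.injEq]; exact ⟨this.2, this.1⟩)
  have hmin0 : n₁ + m₁ = 0 := by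
    by_contra h
    have := hdelta' _ h
    rw [hc_min] at this
    exact mul_ne_zero (hBm m₁ (B.min'_mem hB_ne)) (hAn n₁ (A.min'_mem hA_ne)) this
  have hmax0 : n₂ + m₂ = 0 := by
    by_contra h
    have := hdelta' _ h
    rw [hc_max] at this
    exact mul_ne_zero (hBm m₂ (B.max'_mem hB_ne)) (hAn n₂ (A.max'_mem hA_ne)) this
  have hn12 : n₁ = n₂ := by
    have h1 := A.min'_le n₂ (A.max'_mem hA_ne)
    have h2 := B.min'_le m₂ (B.max'_mem hB_ne)
    omega
  have hAsing : A = {n₁} := by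
    apply Finset.eq_singleton_iff_nonempty_unique_mem.mpr
    refine ⟨hA_ne, fun n hn => ?_⟩
    have h1 := A.min'_le n hn
    have h2 := A.le_max' n hn
    omega
  rw [hAsing, Finset.sum_singleton] at hrepr₂'
  refine ⟨a n₁, hAn n₁ (A.min'_mem hA_ne), n₁, ?_⟩
  have hcoe : (hf₂.toLp f₂ : ℝ → ℂ) =ᵐ[volume] fun t => a n₁ * f₁ (t - (n₁ : ℝ)) := by
    rw [hrepr₂']
    filter_upwards [Lp.coeFn_smul (a n₁) (T₁ n₁), translateLp_coeFn f₁ hf₁ n₁] with t h1 h2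
    rw [h1, Pi.smul_apply, h2]
    rfl
  exact hf₂.coeFn_toLp.symm.trans hcoe
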